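/- (Proposition: averaging matrices are row-stochastic and open-circuit load voltages are positive) Let B be the susceptance matrix of a connected weighted graph, partitioned into load and inverter blocks, and let K_I be a diagonal matrix with strictly negative diagonal entries. Then the matrices W_1 := −B_red^{−1}B_LI(B_II+K_I)^{−1}K_I ∈ ℝ^{n×m} and W_2 := (B_II+K_I)^{−1}(−B_IL | K_I) ∈ ℝ^{m×(n+m)} are row-stochastic: all their entries are nonnegative and every row sums to 1. Consequently, for every vector E_I* ∈ ℝ^m with strictly positive entries, the open-circuit load voltage vector E_L* := W_1 E_I* has strictly positive entries. -/

import Mathlib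

open Matrix

def suscGraph {V : Type*} (B : Matrix V V ℝ) : SimpleGraph V where
  Adj i j := i ≠ j ∧ 0 < B i j ∧ 0 < B j i
  symm := ⟨fun _ _ h => ⟨h.1.symm, h.2.2, h.2.1⟩⟩
  loopless := ⟨fun _ h => h.1 rfl⟩

def IsSusceptance {V : Type*} [Fintype V] [DecidableEq V] (B : Matrix V V ℝ) : Prop :=
  B.IsSymm ∧ (∀ i j, i ≠ j → 0 ≤ B i j) ∧
    (∀ i, B i i = -∑ j ∈ Finset.univ.erase i, B i j) ∧ (suscGraph B).Connected

/-- A matrix is row-stochastic if its entries are nonnegative and each row sums to 1. -/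
def RowStochastic {a b : Type*} [Fintype b] (W : Matrix a b ℝ) : Prop :=
  (∀ i j, 0 ≤ W i j) ∧ ∀ i, ∑ j, W i j = 1



lemma sdd_det_isUnit {p : ℕ} {A : Matrix (Fin p) (Fin p) ℝ}
    (hdom : ∀ i, ∑ j ∈ Finset.univ.erase i, |A i j| < A i i) :
    IsUnit A.det := by
  rw [isUnit_iff_ne_zero]
  intro hdet
  obtain ⟨v, hv0, hAv⟩ := (Matrix.exists_mulVec_eq_zero_iff).mpr hdet
  obtain ⟨j, hj⟩ := Function.ne_iff.mp hv0
  obtain ⟨i0, -, hi0⟩ := Finset.exists_max_image Finset.univ (fun i => |v i|)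
    ⟨j, Finset.mem_univ j⟩
  have hvpos : 0 < |v i0| := lt_of_lt_of_le (abs_pos.mpr hj) (hi0 j (Finset.mem_univ j))
  have habs0 : 0 ≤ ∑ l ∈ Finset.univ.erase i0, |A i0 l| :=
    Finset.sum_nonneg fun l _ => abs_nonneg _
  have hApos : 0 < A i0 i0 := lt_of_le_of_lt habs0 (hdom i0)
  have heq : ∑ l, A i0 l * v l = 0 := by
    have := congrFun hAv i0
    simpa [Matrix.mulVec, dotProduct] using this
  have hsplit : A i0 i0 * v i0 + ∑ l ∈ Finset.univ.erase i0, A i0 l * v l = 0 := by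
    rw [Finset.add_sum_erase Finset.univ (fun l => A i0 l * v l) (Finset.mem_univ i0)]
    exact heq
  have h1 : A i0 i0 * |v i0| = |∑ l ∈ Finset.univ.erase i0, A i0 l * v l| := by
    have : ∑ l ∈ Finset.univ.erase i0, A i0 l * v l = -(A i0 i0 * v i0) := by linarith
    rw [this, abs_neg, abs_mul, abs_of_pos hApos]
  have h2 : |∑ l ∈ Finset.univ.erase i0, A i0 l * v l|
      ≤ ∑ l ∈ Finset.univ.erase i0, |A i0 l| * |v l| := by
    refine (Finset.abs_sum_le_sum_abs _ _).trans_eq ?_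
    exact Finset.sum_congr rfl fun l _ => abs_mul _ _
  have h3 : ∑ l ∈ Finset.univ.erase i0, |A i0 l| * |v l|
      ≤ ∑ l ∈ Finset.univ.erase i0, |A i0 l| * |v i0| :=
    Finset.sum_le_sum fun l _ => mul_le_mul_of_nonneg_left (hi0 l (Finset.mem_univ l)) (abs_nonneg _)
  have h4 : ∑ l ∈ Finset.univ.erase i0, |A i0 l| * |v i0|
      = (∑ l ∈ Finset.univ.erase i0, |A i0 l|) * |v i0| := (Finset.sum_mul _ _ _).symm
  have h5 : (∑ l ∈ Finset.univ.erase i0, |A i0 l|) * |v i0| < A i0 i0 * |v i0| :=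
    mul_lt_mul_of_pos_right (hdom i0) hvpos
  linarith

lemma sdd_inv_nonneg {p : ℕ} {A : Matrix (Fin p) (Fin p) ℝ}
    (hoff : ∀ i j, i ≠ j → A i j ≤ 0)
    (hdom : ∀ i, ∑ j ∈ Finset.univ.erase i, |A i j| < A i i) :
    ∀ i j, 0 ≤ A⁻¹ i j := by
  have hdet := sdd_det_isUnit hdom
  intro i1 j0
  by_contra hneg
  push_neg at hneg
  set x : Fin p → ℝ := fun i => A⁻¹ i j0 with hx
  obtain ⟨i0, -, hi0⟩ := Finset.exists_min_image Finset.univ x ⟨i1, Finset.mem_univ i1⟩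
  have hxi0 : x i0 < 0 := lt_of_le_of_lt (hi0 i1 (Finset.mem_univ i1)) hneg
  have heq : ∑ l, A i0 l * x l = (1 : Matrix (Fin p) (Fin p) ℝ) i0 j0 := by
    have := Matrix.mul_nonsing_inv A hdet
    have h2 := congrFun (congrFun this i0) j0
    simpa [Matrix.mul_apply] using h2
  have hub : ∀ l ∈ Finset.univ.erase i0, A i0 l * x l ≤ A i0 l * x i0 := by
    intro l hl
    exact mul_le_mul_of_nonpos_left (hi0 l (Finset.mem_univ l))
      (hoff i0 l (Finset.ne_of_mem_erase hl).symm)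
  have hsplit : ∑ l, A i0 l * x l
      = A i0 i0 * x i0 + ∑ l ∈ Finset.univ.erase i0, A i0 l * x l :=
    (Finset.add_sum_erase Finset.univ (fun l => A i0 l * x l) (Finset.mem_univ i0)).symm
  have h3 : ∑ l ∈ Finset.univ.erase i0, A i0 l * x l
      ≤ (∑ l ∈ Finset.univ.erase i0, A i0 l) * x i0 := by
    rw [Finset.sum_mul]
    exact Finset.sum_le_sum hub
  have h4 : (∑ l ∈ Finset.univ.erase i0, A i0 l) ≥ -(∑ l ∈ Finset.univ.erase i0, |A i0 l|) := by
    rw [← Finset.sum_neg_distrib]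
    exact Finset.sum_le_sum fun l _ => neg_abs_le _
  have h5 : 0 < A i0 i0 + ∑ l ∈ Finset.univ.erase i0, A i0 l := by
    have := hdom i0; linarith
  have h6 : (A i0 i0 + ∑ l ∈ Finset.univ.erase i0, A i0 l) * x i0 < 0 :=
    mul_neg_of_pos_of_neg h5 hxi0
  have h7 : (0:ℝ) ≤ (1 : Matrix (Fin p) (Fin p) ℝ) i0 j0 := by
    rw [Matrix.one_apply]; split <;> norm_num
  nlinarith [heq, hsplit, h3]

lemma neg_inv_eq' {p : ℕ} {X : Matrix (Fin p) (Fin p) ℝ} (h : IsUnit X.det) :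
    (-X)⁻¹ = -X⁻¹ := by
  apply Matrix.inv_eq_right_inv
  rw [neg_mul_neg, Matrix.mul_nonsing_inv _ h]

lemma wdd_inv_nonneg {p : ℕ} {A : Matrix (Fin p) (Fin p) ℝ}
    (hoff : ∀ i j, i ≠ j → A i j ≤ 0)
    (hdom : ∀ i, 0 ≤ ∑ j, A i j)
    (hdet : IsUnit A.det) : ∀ i j, 0 ≤ A⁻¹ i j := by
  intro i j
  have key : ∀ ε : ℝ, 0 < ε → 0 ≤ (A + ε • 1)⁻¹ i j := by
    intro ε hε
    apply sdd_inv_nonneg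
    · intro a b hab
      have : ((1 : Matrix (Fin p) (Fin p) ℝ)) a b = 0 := Matrix.one_apply_ne hab
      simp only [Matrix.add_apply, Matrix.smul_apply, this, smul_eq_mul, mul_zero, add_zero]
      exact hoff a b hab
    · intro a
      have hd : (A + ε • 1) a a = A a a + ε := by
        simp [Matrix.add_apply, Matrix.one_apply_eq]
      have hsum : ∑ b ∈ Finset.univ.erase a, |(A + ε • 1) a b|
          = ∑ b ∈ Finset.univ.erase a, -(A a b) := by
        refine Finset.sum_congr rfl fun b hb => ?_
        have hne : a ≠ b := (Finset.ne_of_mem_erase hb).symm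
        have h1 : ((1 : Matrix (Fin p) (Fin p) ℝ)) a b = 0 := Matrix.one_apply_ne hne
        simp only [Matrix.add_apply, Matrix.smul_apply, h1, smul_eq_mul, mul_zero, add_zero]
        exact abs_of_nonpos (hoff a b hne)
      have htot : A a a + ∑ b ∈ Finset.univ.erase a, A a b = ∑ b, A a b :=
        Finset.add_sum_erase Finset.univ (fun b => A a b) (Finset.mem_univ a)
      have := hdom a
      rw [hsum, hd, Finset.sum_neg_distrib]
      linarith
  have hcont : Continuous fun ε : ℝ => A + ε • (1 : Matrix (Fin p) (Fin p) ℝ) :=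
    continuous_const.add (continuous_id.smul continuous_const)
  have hdet0 : (A + (0:ℝ) • 1).det ≠ 0 := by
    simpa using hdet.ne_zero
  have hca : ContinuousAt (fun ε : ℝ => (A + ε • 1)⁻¹ i j) 0 := by
    have heq : (fun ε : ℝ => (A + ε • 1)⁻¹ i j)
        = fun ε : ℝ => ((A + ε • 1).det)⁻¹ * (A + ε • 1).adjugate i j := by
      funext ε
      rw [Matrix.inv_def, Matrix.smul_apply, smul_eq_mul, Ring.inverse_eq_inv']
    rw [heq]
    exact ContinuousAt.mul ((hcont.matrix_det.continuousAt).inv₀ hdet0)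
      (hcont.matrix_adjugate.matrix_elem i j).continuousAt
  have hten : Filter.Tendsto (fun ε : ℝ => (A + ε • 1)⁻¹ i j)
      (nhdsWithin 0 (Set.Ioi 0)) (nhds ((A + (0:ℝ) • 1)⁻¹ i j)) :=
    hca.continuousWithinAt.tendsto
  have hle : 0 ≤ (A + (0:ℝ) • 1)⁻¹ i j :=
    ge_of_tendsto hten (Filter.eventually_of_mem self_mem_nhdsWithin fun ε hε => key ε hε)
  simpa using hle

lemma matMul_nonpos_nonneg {a b c : Type*} [Fintype b] {M : Matrix a b ℝ} {N : Matrix b c ℝ}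
    (hM : ∀ i j, M i j ≤ 0) (hN : ∀ i j, 0 ≤ N i j) : ∀ i j, (M * N) i j ≤ 0 := by
  intro i j
  rw [Matrix.mul_apply]
  exact Finset.sum_nonpos fun l _ => mul_nonpos_of_nonpos_of_nonneg (hM i l) (hN l j)

lemma matMul_nonneg_nonpos {a b c : Type*} [Fintype b] {M : Matrix a b ℝ} {N : Matrix b c ℝ}
    (hM : ∀ i j, 0 ≤ M i j) (hN : ∀ i j, N i j ≤ 0) : ∀ i j, (M * N) i j ≤ 0 := by
  intro i j
  rw [Matrix.mul_apply]
  exact Finset.sum_nonpos fun l _ => mul_nonpos_of_nonneg_of_nonpos (hM i l) (hN l j)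

lemma matMul_nonpos_nonpos {a b c : Type*} [Fintype b] {M : Matrix a b ℝ} {N : Matrix b c ℝ}
    (hM : ∀ i j, M i j ≤ 0) (hN : ∀ i j, N i j ≤ 0) : ∀ i j, 0 ≤ (M * N) i j := by
  intro i j
  rw [Matrix.mul_apply]
  exact Finset.sum_nonneg fun l _ => (by nlinarith [hM i l, hN l j] : (0:ℝ) ≤ M i l * N l j)

/-- the averaging matrices `W₁ = -B_red⁻¹ B_LI (B_II+K_I)⁻¹ K_I` and
`W₂ = (B_II+K_I)⁻¹ (-B_IL | K_I)` are row-stochastic, and consequently the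
open-circuit load voltage vector `E_L* = W₁ E_I*` is strictly positive whenever
`E_I*` is strictly positive. -/
theorem averaging_matrices_rowStochastic {n m : ℕ} (hn : 0 < n) (hm : 0 < m)
    (B : Matrix (Fin n ⊕ Fin m) (Fin n ⊕ Fin m) ℝ) (hB : IsSusceptance B)
    (k : Fin m → ℝ) (hk : ∀ i, k i < 0)
    (hinv1 : IsUnit (B.toBlocks₂₂ + Matrix.diagonal k).det)
    (hinv2 : IsUnit
      (B.toBlocks₁₁ -
        B.toBlocks₁₂ * (B.toBlocks₂₂ + Matrix.diagonal k)⁻¹ * B.toBlocks₂₁).det) :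
    let Bred := B.toBlocks₁₁ -
      B.toBlocks₁₂ * (B.toBlocks₂₂ + Matrix.diagonal k)⁻¹ * B.toBlocks₂₁
    let W1 := -(Bred⁻¹ * B.toBlocks₁₂ * (B.toBlocks₂₂ + Matrix.diagonal k)⁻¹ *
      Matrix.diagonal k)
    let W2 := (B.toBlocks₂₂ + Matrix.diagonal k)⁻¹ *
      Matrix.fromCols (-B.toBlocks₂₁) (Matrix.diagonal k)
    RowStochastic W1 ∧ RowStochastic W2 ∧
      ∀ EIstar : Fin m → ℝ, (∀ i, 0 < EIstar i) → ∀ i, 0 < W1.mulVec EIstar i := by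
  obtain ⟨hsym, hpos, hdiag, -⟩ := hB
  intro Bred W1 W2
  have hb11 : ∀ i j, B.toBlocks₁₁ i j = B (Sum.inl i) (Sum.inl j) := fun _ _ => rfl
  have hb12 : ∀ i j, B.toBlocks₁₂ i j = B (Sum.inl i) (Sum.inr j) := fun _ _ => rfl
  have hb21 : ∀ i j, B.toBlocks₂₁ i j = B (Sum.inr i) (Sum.inl j) := fun _ _ => rfl
  have hb22 : ∀ i j, B.toBlocks₂₂ i j = B (Sum.inr i) (Sum.inr j) := fun _ _ => rfl
  have hrow : ∀ x, ∑ y, B x y = 0 := by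
    intro x
    have h1 := hdiag x
    have h2 := Finset.add_sum_erase Finset.univ (B x) (Finset.mem_univ x)
    linarith
  have hBLI : ∀ i j, 0 ≤ B.toBlocks₁₂ i j := fun i j => by
    rw [hb12]; exact hpos _ _ (by simp)
  have hBIL : ∀ i j, 0 ≤ B.toBlocks₂₁ i j := fun i j => by
    rw [hb21]; exact hpos _ _ (by simp)
  have hDle : ∀ i j, Matrix.diagonal k i j ≤ 0 := by
    intro i j
    by_cases h : i = j
    · subst h; simpa using (hk i).le
    · simp [Matrix.diagonal_apply_ne _ h]
  -- row sums over the inverter block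
  have hIrow : ∀ i, ∑ a, B.toBlocks₂₁ i a + ∑ b, B.toBlocks₂₂ i b = 0 := by
    intro i
    have := hrow (Sum.inr i)
    rw [Fintype.sum_sum_type] at this
    simpa [hb21, hb22] using this
  have hLrow : ∀ i, ∑ a, B.toBlocks₁₁ i a + ∑ b, B.toBlocks₁₂ i b = 0 := by
    intro i
    have := hrow (Sum.inl i)
    rw [Fintype.sum_sum_type] at this
    simpa [hb11, hb12] using this
  -- (B₂₂ + diag k) is (negated) strictly diagonally dominant
  have hoffP : ∀ i j : Fin m, i ≠ j →
      (-(B.toBlocks₂₂ + Matrix.diagonal k)) i j ≤ 0 := by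
    intro i j hij
    have : (-(B.toBlocks₂₂ + Matrix.diagonal k)) i j = -(B (Sum.inr i) (Sum.inr j)) := by
      simp [Matrix.neg_apply, Matrix.add_apply, Matrix.diagonal_apply_ne _ hij, hb22]
    rw [this]
    simp only [neg_nonpos]
    exact hpos _ _ (by simp [hij])
  have hdomP : ∀ i, ∑ j ∈ Finset.univ.erase i,
      |(-(B.toBlocks₂₂ + Matrix.diagonal k)) i j| < (-(B.toBlocks₂₂ + Matrix.diagonal k)) i i := by
    intro i
    have hSL : 0 ≤ ∑ a, B.toBlocks₂₁ i a := Finset.sum_nonneg fun a _ => hBIL i a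
    have herase : B.toBlocks₂₂ i i + ∑ b ∈ Finset.univ.erase i, B.toBlocks₂₂ i b
        = ∑ b, B.toBlocks₂₂ i b :=
      Finset.add_sum_erase Finset.univ (fun b => B.toBlocks₂₂ i b) (Finset.mem_univ i)
    have habs : ∑ j ∈ Finset.univ.erase i, |(-(B.toBlocks₂₂ + Matrix.diagonal k)) i j|
        = ∑ j ∈ Finset.univ.erase i, B.toBlocks₂₂ i j := by
      refine Finset.sum_congr rfl fun b hb => ?_
      have hne : i ≠ b := (Finset.ne_of_mem_erase hb).symm
      have h1 : (-(B.toBlocks₂₂ + Matrix.diagonal k)) i b = -(B.toBlocks₂₂ i b) := by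
        simp [Matrix.neg_apply, Matrix.add_apply, Matrix.diagonal_apply_ne _ hne]
      rw [h1, abs_neg, abs_of_nonneg]
      rw [hb22]; exact hpos _ _ (by simp [hne])
    have hdg : (-(B.toBlocks₂₂ + Matrix.diagonal k)) i i = -(B.toBlocks₂₂ i i + k i) := by
      simp [Matrix.neg_apply, Matrix.add_apply]
    rw [habs, hdg]
    have := hk i
    have h2 := hIrow i
    linarith
  have hA2inv : ∀ i j, (B.toBlocks₂₂ + Matrix.diagonal k)⁻¹ i j ≤ 0 := by
    have h1 := sdd_inv_nonneg hoffP hdomP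
    have h2 : (-(B.toBlocks₂₂ + Matrix.diagonal k))⁻¹
        = -(B.toBlocks₂₂ + Matrix.diagonal k)⁻¹ := neg_inv_eq' hinv1
    intro i j
    have := h1 i j
    rw [h2] at this
    simpa using this
  -- inverse cancellation
  have hA2mul : ∀ x : Fin m → ℝ,
      (B.toBlocks₂₂ + Matrix.diagonal k)⁻¹ *ᵥ ((B.toBlocks₂₂ + Matrix.diagonal k) *ᵥ x) = x := by
    intro x
    rw [Matrix.mulVec_mulVec, Matrix.nonsing_inv_mul _ hinv1, Matrix.one_mulVec]
  -- the key row-sum identity for the C block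
  have hCone : (Matrix.fromCols (-B.toBlocks₂₁) (Matrix.diagonal k)) *ᵥ (fun _ => (1:ℝ))
      = (B.toBlocks₂₂ + Matrix.diagonal k) *ᵥ (fun _ => (1:ℝ)) := by
    funext i
    have h2 := hIrow i
    have hdsum : ∑ j, Matrix.diagonal k i j = k i := by
      simp [Matrix.diagonal_apply]
    simp only [Matrix.mulVec, dotProduct, mul_one, Fintype.sum_sum_type,
      Matrix.fromCols, Matrix.of_apply, Sum.elim_inl, Sum.elim_inr,
      Matrix.add_apply, Matrix.neg_apply, Finset.sum_add_distrib, Finset.sum_neg_distrib]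
    rw [hdsum]
    linarith
  -- W2 is row-stochastic
  have hW2nonneg : ∀ i j, 0 ≤ W2 i j := by
    have hCle : ∀ (i : Fin m) (j : Fin n ⊕ Fin m),
        (Matrix.fromCols (-B.toBlocks₂₁) (Matrix.diagonal k)) i j ≤ 0 := by
      rintro i (j | j)
      · simp only [Matrix.fromCols, Matrix.of_apply, Sum.elim_inl, Matrix.neg_apply,
          neg_nonpos]
        exact hBIL i j
      · simp only [Matrix.fromCols, Matrix.of_apply, Sum.elim_inr]
        exact hDle i j
    exact matMul_nonpos_nonpos hA2inv hCle
  have hW2sum : ∀ i, ∑ j, W2 i j = 1 := by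
    intro i
    have h1 : ∑ j, W2 i j = (W2 *ᵥ fun _ => (1:ℝ)) i := by
      simp [Matrix.mulVec, dotProduct]
    rw [h1]
    show (((B.toBlocks₂₂ + Matrix.diagonal k)⁻¹ *
      Matrix.fromCols (-B.toBlocks₂₁) (Matrix.diagonal k)) *ᵥ fun _ => (1:ℝ)) i = 1
    rw [← Matrix.mulVec_mulVec, hCone, hA2mul]
  -- Bred row sums
  have hBredOne : Bred *ᵥ (fun _ => (1:ℝ))
      = -(B.toBlocks₁₂ *ᵥ ((B.toBlocks₂₂ + Matrix.diagonal k)⁻¹ *ᵥ k)) := by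
    have hBIL1 : B.toBlocks₂₁ *ᵥ (fun _ => (1:ℝ))
        = k - (B.toBlocks₂₂ + Matrix.diagonal k) *ᵥ (fun _ => (1:ℝ)) := by
      funext i
      have h2 := hIrow i
      have hdsum : ∑ j, Matrix.diagonal k i j = k i := by
        simp [Matrix.diagonal_apply]
      simp only [Matrix.mulVec, dotProduct, mul_one, Pi.sub_apply,
        Matrix.add_apply, Finset.sum_add_distrib]
      rw [hdsum]
      linarith
    have hBLL1 : B.toBlocks₁₁ *ᵥ (fun _ => (1:ℝ))
        = -(B.toBlocks₁₂ *ᵥ (fun _ => (1:ℝ))) := by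
      funext i
      have h2 := hLrow i
      simp only [Matrix.mulVec, dotProduct, mul_one, Pi.neg_apply]
      linarith
    show (B.toBlocks₁₁ -
        B.toBlocks₁₂ * (B.toBlocks₂₂ + Matrix.diagonal k)⁻¹ * B.toBlocks₂₁) *ᵥ _ = _
    rw [Matrix.sub_mulVec, hBLL1, Matrix.mul_assoc, ← Matrix.mulVec_mulVec,
      ← Matrix.mulVec_mulVec, hBIL1, Matrix.mulVec_sub, hA2mul, Matrix.mulVec_sub]
    abel
  -- W1 row sums
  have hW1sum : ∀ i, ∑ j, W1 i j = 1 := by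
    intro i
    have h1 : ∑ j, W1 i j = (W1 *ᵥ fun _ => (1:ℝ)) i := by
      simp [Matrix.mulVec, dotProduct]
    rw [h1]
    show ((-(Bred⁻¹ * B.toBlocks₁₂ * (B.toBlocks₂₂ + Matrix.diagonal k)⁻¹ *
      Matrix.diagonal k)) *ᵥ fun _ => (1:ℝ)) i = 1
    have hD1 : Matrix.diagonal k *ᵥ (fun _ => (1:ℝ)) = k := by
      funext i
      simp [Matrix.mulVec, dotProduct, Matrix.diagonal_apply]
    have hkey : B.toBlocks₁₂ *ᵥ ((B.toBlocks₂₂ + Matrix.diagonal k)⁻¹ *ᵥ k)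
        = -(Bred *ᵥ (fun _ => (1:ℝ))) := by rw [hBredOne, neg_neg]
    rw [Matrix.neg_mulVec, Matrix.mul_assoc, Matrix.mul_assoc, ← Matrix.mulVec_mulVec,
      ← Matrix.mulVec_mulVec, ← Matrix.mulVec_mulVec, hD1, hkey,
      Matrix.mulVec_neg, Matrix.mulVec_mulVec, Matrix.nonsing_inv_mul _ hinv2,
      Matrix.one_mulVec, neg_neg]
  -- -Bred is a weakly diagonally dominant Z-matrix
  have hT : ∀ i j, (B.toBlocks₁₂ * (B.toBlocks₂₂ + Matrix.diagonal k)⁻¹ * B.toBlocks₂₁) i j ≤ 0 :=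
    matMul_nonpos_nonneg (matMul_nonneg_nonpos hBLI hA2inv) hBIL
  have hQoff : ∀ i j : Fin n, i ≠ j → (-Bred) i j ≤ 0 := by
    intro i j hij
    have h1 : (-Bred) i j = -(B.toBlocks₁₁ i j) +
        (B.toBlocks₁₂ * (B.toBlocks₂₂ + Matrix.diagonal k)⁻¹ * B.toBlocks₂₁) i j := by
      show -((B.toBlocks₁₁ -
        B.toBlocks₁₂ * (B.toBlocks₂₂ + Matrix.diagonal k)⁻¹ * B.toBlocks₂₁) i j) = _
      rw [Matrix.sub_apply]; ring
    rw [h1]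
    have h2 : 0 ≤ B.toBlocks₁₁ i j := by
      rw [hb11]; exact hpos _ _ (by simp [hij])
    have := hT i j
    linarith
  have hzk : ∀ j, 0 ≤ ((B.toBlocks₂₂ + Matrix.diagonal k)⁻¹ *ᵥ k) j := by
    intro j
    simp only [Matrix.mulVec, dotProduct]
    exact Finset.sum_nonneg fun l _ => by nlinarith [hA2inv j l, hk l]
  have hQdom : ∀ i, 0 ≤ ∑ j, (-Bred) i j := by
    intro i
    have h1 : ∑ j, (-Bred) i j = ((-Bred) *ᵥ fun _ => (1:ℝ)) i := by
      simp [Matrix.mulVec, dotProduct]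
    rw [h1, Matrix.neg_mulVec, hBredOne, neg_neg]
    simp only [Matrix.mulVec, dotProduct]
    exact Finset.sum_nonneg fun l _ => mul_nonneg (hBLI i l) (hzk l)
  have hQdet : IsUnit (-Bred).det := by
    rw [Matrix.det_neg]
    exact (((isUnit_one (M := ℝ)).neg).pow _).mul hinv2
  have hQinv := wdd_inv_nonneg hQoff hQdom hQdet
  have hBredInv : ∀ i j, Bred⁻¹ i j ≤ 0 := by
    intro i j
    have h2 : (-Bred)⁻¹ = -Bred⁻¹ := neg_inv_eq' hinv2
    have := hQinv i j
    rw [h2] at this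
    simpa using this
  -- W1 nonneg
  have hW1nonneg : ∀ i j, 0 ≤ W1 i j := by
    intro i j
    have h1 : ∀ i j, ((Bred⁻¹ * B.toBlocks₁₂) *
        ((B.toBlocks₂₂ + Matrix.diagonal k)⁻¹ * Matrix.diagonal k)) i j ≤ 0 :=
      matMul_nonpos_nonneg (matMul_nonpos_nonneg hBredInv hBLI)
        (matMul_nonpos_nonpos hA2inv hDle)
    have h2 : W1 i j = -(((Bred⁻¹ * B.toBlocks₁₂) *
        ((B.toBlocks₂₂ + Matrix.diagonal k)⁻¹ * Matrix.diagonal k)) i j) := by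
      show -((Bred⁻¹ * B.toBlocks₁₂ * (B.toBlocks₂₂ + Matrix.diagonal k)⁻¹ *
        Matrix.diagonal k) i j) = _
      rw [Matrix.mul_assoc (Bred⁻¹ * B.toBlocks₁₂)]
    rw [h2]
    have := h1 i j
    linarith
  refine ⟨⟨hW1nonneg, hW1sum⟩, ⟨hW2nonneg, hW2sum⟩, ?_⟩
  intro E hE i
  obtain ⟨j0, -, hj0⟩ := Finset.exists_min_image Finset.univ E ⟨⟨0, hm⟩, Finset.mem_univ _⟩
  have hc : 0 < E j0 := hE j0
  have h1 : W1.mulVec E i = ∑ j, W1 i j * E j := by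
    simp [Matrix.mulVec, dotProduct]
  have h2 : ∑ j, W1 i j * E j0 ≤ ∑ j, W1 i j * E j :=
    Finset.sum_le_sum fun j _ =>
      mul_le_mul_of_nonneg_left (hj0 j (Finset.mem_univ j)) (hW1nonneg i j)
  have h3 : ∑ j, W1 i j * E j0 = E j0 := by
    rw [← Finset.sum_mul, hW1sum i, one_mul]
  rw [h1]
  linarith
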